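/- arXiv:1711.05156 — 5 statements merged into one kernel-verified Lean document; each statement's English description precedes it below -/
import Mathlib

section
/- Let 0 → L → E →^p Q → 0 be an extension of (k,A)-Lie-Rinehart algebras, with b the anchor of Q, and let Z(L) = {z ∈ L : [z,ℓ] = 0 for all ℓ ∈ L} be the centre of L. Then: (i) Z(L) is an A-submodule of L; (ii) for every x ∈ Q and z ∈ Z(L), the element [x', z]_E, where x' ∈ E is any element with p(x') = x, lies in Z(L) and is independent of the choice of the lift x'; (iii) the resulting map ρ : Q → End_k(Z(L)), ρ(x)(z) = [x',z]_E, is A-linear in x and satisfies ρ(x)(f·z) = f·ρ(x)(z) + b(x)(f)·z and ρ([x,y]) = ρ(x)∘ρ(y) − ρ(y)∘ρ(x) for all x,y ∈ Q, f ∈ A, z ∈ Z(L). Thus the extension induces a representation of Q on Z(L). -/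
/-- Let `0 → L → E →ᵖ Q → 0` be an extension of `(k,A)`-Lie-Rinehart algebras, with `bQ` the
anchor of `Q`, and let `Z(L)` be the centre of the kernel `L = ker p`. Then:
(i) `Z(L)` is an `A`-submodule of `L`;
(ii) for `x ∈ Q` and `z ∈ Z(L)`, the element `[x',z]`, for any lift `x'` of `x`, lies in `Z(L)`
and is independent of the choice of lift;
(iii) the resulting map `ρ(x)(z) = [x',z]` is `A`-linear in `x`, satisfies
`ρ(x)(f·z) = f·ρ(x)(z) + bQ(x)(f)·z` and `ρ([x,y]) = ρ(x)∘ρ(y) − ρ(y)∘ρ(x)`.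
Thus the extension induces a representation of `Q` on `Z(L)`. -/
theorem extension_induces_representation_on_centre
    (k A E Q : Type*) [Field k] [CommRing A] [Algebra k A]
    [AddCommGroup E] [Module k E] [Module A E] [IsScalarTower k A E]
    [AddCommGroup Q] [Module k Q] [Module A Q] [IsScalarTower k A Q]
    -- Lie-Rinehart structure on E
    (brE : E →ₗ[k] E →ₗ[k] E) (aE : E →ₗ[A] Derivation k A A)
    (haltE : ∀ x : E, brE x x = 0)
    (hjacE : ∀ x y z : E, brE x (brE y z) + brE y (brE z x) + brE z (brE x y) = 0)
    (hleibE : ∀ (s t : E) (f : A), brE s (f • t) = f • brE s t + (aE s) f • t)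
    (hanchE : ∀ s t : E, aE (brE s t) = ⁅aE s, aE t⁆)
    -- Lie-Rinehart structure on Q
    (brQ : Q →ₗ[k] Q →ₗ[k] Q) (bQ : Q →ₗ[A] Derivation k A A)
    (haltQ : ∀ x : Q, brQ x x = 0)
    (hjacQ : ∀ x y z : Q, brQ x (brQ y z) + brQ y (brQ z x) + brQ z (brQ x y) = 0)
    (hleibQ : ∀ (s t : Q) (f : A), brQ s (f • t) = f • brQ s t + (bQ s) f • t)
    (hanchQ : ∀ s t : Q, bQ (brQ s t) = ⁅bQ s, bQ t⁆)
    -- the surjective morphism p with kernel L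
    (p : E →ₗ[A] Q)
    (hp : Function.Surjective p)
    (hpbr : ∀ e₁ e₂ : E, p (brE e₁ e₂) = brQ (p e₁) (p e₂))
    (hpa : ∀ e : E, bQ (p e) = aE e)
    -- the centre of the kernel L = ker p
    (Zc : E → Prop)
    (hZc : ∀ z : E, Zc z ↔ z ∈ LinearMap.ker p ∧ ∀ ℓ ∈ LinearMap.ker p, brE z ℓ = 0) :
    -- (i) Z(L) is an A-submodule of L
    (Zc 0) ∧
    (∀ z w : E, Zc z → Zc w → Zc (z + w)) ∧
    (∀ (f : A) (z : E), Zc z → Zc (f • z)) ∧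
    -- (ii) [x', z] is central, and is independent of the choice of the lift x'
    (∀ (x' z : E), Zc z → Zc (brE x' z)) ∧
    (∀ (x' x'' z : E), p x' = p x'' → Zc z → brE x' z = brE x'' z) ∧
    -- (iii) the induced map ρ(x)(z) = [x',z] (expressed via lifts) is A-linear in x,
    -- satisfies the Leibniz rule in z, and is a morphism of Lie brackets
    (∀ (x' z : E) (f : A), Zc z → brE (f • x') z = f • brE x' z) ∧
    (∀ (x' y' z : E), Zc z → brE (x' + y') z = brE x' z + brE y' z) ∧
    (∀ (x' z : E) (f : A), Zc z → brE x' (f • z) = f • brE x' z + (bQ (p x')) f • z) ∧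
    (∀ (x' y' w' z : E), p w' = brQ (p x') (p y') → Zc z →
      brE w' z = brE x' (brE y' z) - brE y' (brE x' z)) := by
  -- antisymmetry
  have hskew : ∀ x y : E, brE x y = - brE y x := by
    intro x y
    have h := haltE (x + y)
    simp only [map_add, LinearMap.add_apply, haltE, zero_add, add_zero] at h
    exact eq_neg_of_add_eq_zero_right h
  -- anchor vanishes on the kernel
  have haker : ∀ ℓ : E, ℓ ∈ LinearMap.ker p → aE ℓ = 0 := by
    intro ℓ hℓ
    rw [← hpa ℓ, LinearMap.mem_ker.mp hℓ, map_zero]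
  -- central elements bracket to zero with kernel elements, both ways
  have hcl : ∀ z ℓ : E, Zc z → ℓ ∈ LinearMap.ker p → brE ℓ z = 0 := by
    intro z ℓ hz hℓ
    rw [hskew, ((hZc z).mp hz).2 ℓ hℓ, neg_zero]
  have hind : ∀ (x' x'' z : E), p x' = p x'' → Zc z → brE x' z = brE x'' z := by
    intro x' x'' z hpe hz
    have hmem : x' - x'' ∈ LinearMap.ker p := by
      rw [LinearMap.mem_ker, map_sub, hpe, sub_self]
    have := hcl z (x' - x'') hz hmem
    simp only [map_sub, LinearMap.sub_apply] at this
    exact sub_eq_zero.mp this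
  have hii : ∀ (x' z : E), Zc z → Zc (brE x' z) := by
    intro x' z hz
    obtain ⟨hzk, hzc⟩ := (hZc z).mp hz
    rw [hZc]
    refine ⟨?_, ?_⟩
    · rw [LinearMap.mem_ker, hpbr, LinearMap.mem_ker.mp hzk, map_zero]
    · intro ℓ hℓ
      have hj := hjacE x' z ℓ
      have h1 : brE z ℓ = 0 := hzc ℓ hℓ
      have h2 : brE z (brE ℓ x') = 0 := by
        apply hzc
        rw [LinearMap.mem_ker, hpbr, LinearMap.mem_ker.mp hℓ]
        simp
      rw [h1, map_zero] at hj
      have h3 : brE ℓ (brE x' z) = 0 := by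
        rwa [zero_add, h2, zero_add] at hj
      rw [hskew, h3, neg_zero]
  refine ⟨?_, ?_, ?_, hii, hind, ?_, ?_, ?_, ?_⟩
  · rw [hZc]; exact ⟨Submodule.zero_mem _, fun ℓ _ => by simp⟩
  · intro z w hz hw
    obtain ⟨hzk, hzc⟩ := (hZc z).mp hz
    obtain ⟨hwk, hwc⟩ := (hZc w).mp hw
    rw [hZc]
    exact ⟨Submodule.add_mem _ hzk hwk, fun ℓ hℓ => by
      simp [map_add, hzc ℓ hℓ, hwc ℓ hℓ]⟩
  · intro f z hz
    obtain ⟨hzk, hzc⟩ := (hZc z).mp hz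
    rw [hZc]
    refine ⟨Submodule.smul_mem _ f hzk, fun ℓ hℓ => ?_⟩
    rw [hskew, hleibE, hcl z ℓ hz hℓ, haker ℓ hℓ]
    simp
  · intro x' z f hz
    obtain ⟨hzk, _⟩ := (hZc z).mp hz
    rw [hskew, hleibE, haker z hzk, hskew z x']
    simp
  · intro x' y' z _
    simp [map_add]
  · intro x' z f hz
    rw [hleibE, hpa]
  · intro x' y' w' z hw hz
    have h0 : brE w' z = brE (brE x' y') z := by
      apply hind
      rw [hw, hpbr]
      exact hz
    have hj := hjacE x' y' z
    have h1 : brE z x' = - brE x' z := hskew z x'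
    rw [h0, hskew]
    have h2 : brE z (brE x' y') = -(brE x' (brE y' z) + brE y' (brE z x')) :=
      eq_neg_of_add_eq_zero_right hj
    rw [h2, h1, map_neg]
    abel
end

section
/- Let k be a field, A a commutative associative unital k-algebra, S a set, and a_S : S → Der_k(A) a map; let ā_S : FreeLie_k(S) → Der_k(A) be the morphism of k-Lie algebras induced by a_S via the universal property of the free Lie algebra, and let L_{A,S} = A ⊗_k FreeLie_k(S) be the free (k,A)-Lie-Rinehart algebra, i.e. the transformation Lie-Rinehart algebra of (FreeLie_k(S), ā_S). Let (L, a_L) be any (k,A)-Lie-Rinehart algebra and f : S → L a map such that a_L(f(s)) = a_S(s) for every s ∈ S. Then there exists a unique morphism of (k,A)-Lie-Rinehart algebras g : L_{A,S} → L (A-linear, bracket-preserving, and satisfying a_L ∘ g = anchor of L_{A,S}) such that g(1 ⊗ ι(s)) = f(s) for all s ∈ S, where ι : S → FreeLie_k(S) is the canonical map. -/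
open TensorProduct

/-- **Universal property of the free Lie-Rinehart algebra** (Proposition `mapexists`).
Let `k` be a field, `A` a commutative `k`-algebra, `S` a set and `a_S : S → Der_k(A)` a map,
with `ā_S : FreeLie_k(S) → Der_k(A)` the induced Lie algebra morphism. Let
`L_{A,S} = A ⊗[k] FreeLie_k(S)` be the free `(k,A)`-Lie-Rinehart algebra, i.e. the
transformation Lie-Rinehart algebra of `(FreeLie_k(S), ā_S)`, with bracket `brF` and anchor
`anchF`. Let `(L, a_L)` be any `(k,A)`-Lie-Rinehart algebra and `f : S → L` a map with
`a_L(f(s)) = a_S(s)`. Then there is a unique morphism of `(k,A)`-Lie-Rinehart algebras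
`g : L_{A,S} → L` with `g(1 ⊗ ι(s)) = f(s)` for all `s ∈ S`. -/
theorem free_lie_rinehart_universal_property
    (k A S L : Type*) [Field k] [CommRing A] [Algebra k A]
    [AddCommGroup L] [Module k L] [Module A L] [IsScalarTower k A L]
    (aS : S → Derivation k A A)
    -- the bracket of the free Lie-Rinehart algebra L_{A,S} = A ⊗[k] FreeLie_k(S)
    (brF : (A ⊗[k] FreeLieAlgebra k S) →ₗ[k] (A ⊗[k] FreeLieAlgebra k S) →ₗ[k]
      (A ⊗[k] FreeLieAlgebra k S))
    (hbrF : ∀ (α β : A) (ξ η : FreeLieAlgebra k S),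
      brF (α ⊗ₜ[k] ξ) (β ⊗ₜ[k] η)
        = (α * β) ⊗ₜ[k] ⁅ξ, η⁆
          + (α * (FreeLieAlgebra.lift k aS ξ) β) ⊗ₜ[k] η
          - (β * (FreeLieAlgebra.lift k aS η) α) ⊗ₜ[k] ξ)
    -- the anchor of L_{A,S}
    (anchF : (A ⊗[k] FreeLieAlgebra k S) →ₗ[A] Derivation k A A)
    (hanchF : ∀ (α : A) (ξ : FreeLieAlgebra k S),
      anchF (α ⊗ₜ[k] ξ) = α • (FreeLieAlgebra.lift k aS ξ))
    -- Lie-Rinehart structure on L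
    (brL : L →ₗ[k] L →ₗ[k] L) (aL : L →ₗ[A] Derivation k A A)
    (haltL : ∀ x : L, brL x x = 0)
    (hjacL : ∀ x y z : L, brL x (brL y z) + brL y (brL z x) + brL z (brL x y) = 0)
    (hleibL : ∀ (s t : L) (f : A), brL s (f • t) = f • brL s t + (aL s) f • t)
    (hanchL : ∀ s t : L, aL (brL s t) = ⁅aL s, aL t⁆)
    -- the map f : S → L compatible with the anchors
    (f : S → L)
    (hf : ∀ s : S, aL (f s) = aS s) :
    ∃! g : (A ⊗[k] FreeLieAlgebra k S) →ₗ[A] L,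
      (∀ x y : A ⊗[k] FreeLieAlgebra k S, g (brF x y) = brL (g x) (g y)) ∧
      (∀ x : A ⊗[k] FreeLieAlgebra k S, aL (g x) = anchF x) ∧
      (∀ s : S, g ((1 : A) ⊗ₜ[k] FreeLieAlgebra.of k s) = f s) := by
  
  -- antisymmetry of brL
  have hanti : ∀ x y : L, brL x y = - brL y x := by
    intro x y
    have h := haltL (x + y)
    simp only [map_add, LinearMap.add_apply, haltL] at h
    rw [zero_add, add_zero] at h
    exact eq_neg_of_add_eq_zero_right h
  -- Lie ring / algebra structure on L
  letI : LieRing L :=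
    { bracket := fun x y => brL x y
      add_lie := fun x y z => by simp [map_add]
      lie_add := fun x y z => by simp [map_add]
      lie_self := haltL
      leibniz_lie := fun x y z => by
        show brL x (brL y z) = brL (brL x y) z + brL y (brL x z)
        have hj := hjacL x y z
        have h1 : brL z (brL x y) = - brL (brL x y) z := hanti _ _
        have h2 : brL y (brL z x) = - brL y (brL x z) := by rw [hanti z x, map_neg]
        rw [h1, h2] at hj
        linear_combination (norm := abel) hj }
  letI : LieAlgebra k L := ⟨fun t x y => by show brL x (t • y) = t • brL x y; simp⟩
  have hbracket : ∀ x y : L, ⁅x, y⁆ = brL x y := fun _ _ => rfl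
  set φ : FreeLieAlgebra k S →ₗ⁅k⁆ L := FreeLieAlgebra.lift k f with hφ
  -- anchor compatibility of φ
  have key : ∀ ξ : FreeLieAlgebra k S, aL (φ ξ) = FreeLieAlgebra.lift k aS ξ := by
    set ψ : L →ₗ⁅k⁆ Derivation k A A :=
      { toLinearMap := aL.restrictScalars k
        map_lie' := fun {x y} => hanchL x y }
    have h : ψ.comp φ = FreeLieAlgebra.lift k aS := by
      apply (FreeLieAlgebra.lift k).symm.injective
      funext s
      simp only [FreeLieAlgebra.lift_symm_apply, Function.comp_apply, LieHom.comp_apply, hφ,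
        FreeLieAlgebra.lift_of_apply]
      exact hf s
    intro ξ
    exact LieHom.congr_fun h ξ
  set g : (A ⊗[k] FreeLieAlgebra k S) →ₗ[A] L := LinearMap.liftBaseChange A φ.toLinearMap with hg
  have hgtmul : ∀ (α : A) (ξ : FreeLieAlgebra k S), g (α ⊗ₜ[k] ξ) = α • φ ξ := fun α ξ => rfl
  refine ⟨g, ⟨?_, ?_, ?_⟩, ?_⟩
  · -- bracket
    intro x y
    induction x using TensorProduct.induction_on with
    | zero => simp
    | tmul α ξ =>
      induction y using TensorProduct.induction_on with
      | zero => simp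
      | tmul β η =>
        rw [hbrF]
        rw [map_sub, map_add, hgtmul, hgtmul, hgtmul, hgtmul, hgtmul]
        have e1 : brL (α • φ ξ) (β • φ η)
            = β • brL (α • φ ξ) (φ η) + (aL (α • φ ξ)) β • φ η := hleibL _ _ _
        have e2 : brL (α • φ ξ) (φ η) = - brL (φ η) (α • φ ξ) := hanti _ _
        have e3 : brL (φ η) (α • φ ξ) = α • brL (φ η) (φ ξ) + (aL (φ η)) α • φ ξ := hleibL _ _ _
        have e4 : brL (φ η) (φ ξ) = - brL (φ ξ) (φ η) := hanti _ _
        have e5 : φ ⁅ξ, η⁆ = brL (φ ξ) (φ η) := φ.map_lie ξ η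
        rw [e1, e2, e3, e4, map_smul, key, key, e5]
        simp only [Derivation.smul_apply, Pi.smul_apply, smul_eq_mul, smul_add, smul_neg, smul_smul]
        rw [mul_comm β α]
        abel
      | add y1 y2 h1 h2 => simp only [map_add, h1, h2]
    | add x1 x2 h1 h2 => simp only [map_add, LinearMap.add_apply, h1, h2]
  · -- anchor
    intro x
    induction x using TensorProduct.induction_on with
    | zero => simp
    | tmul α ξ => rw [hgtmul, map_smul, key, hanchF]
    | add x1 x2 h1 h2 => simp only [map_add, h1, h2]
  · -- generators
    intro s
    rw [hgtmul, one_smul, hφ, FreeLieAlgebra.lift_of_apply]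
  · -- uniqueness
    intro g' ⟨hbr', _, hgen'⟩
    have hone : ∀ ξ : FreeLieAlgebra k S, g' ((1 : A) ⊗ₜ[k] ξ) = φ ξ := by
      set χ : FreeLieAlgebra k S →ₗ⁅k⁆ L :=
        { toLinearMap := (g'.restrictScalars k).comp
            ((TensorProduct.mk k A (FreeLieAlgebra k S)) 1)
          map_lie' := by
            intro ξ η
            show g' ((1 : A) ⊗ₜ[k] ⁅ξ, η⁆) = brL (g' (1 ⊗ₜ[k] ξ)) (g' (1 ⊗ₜ[k] η))
            have hb : brF ((1 : A) ⊗ₜ[k] ξ) ((1 : A) ⊗ₜ[k] η) = (1 : A) ⊗ₜ[k] ⁅ξ, η⁆ := by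
              rw [hbrF]
              simp
            rw [← hb, hbr'] }
      have hχ : χ = φ := by
        apply (FreeLieAlgebra.lift k).symm.injective
        funext s
        simp only [FreeLieAlgebra.lift_symm_apply, Function.comp_apply, hφ]
        rw [FreeLieAlgebra.lift_of_apply]
        exact hgen' s
      intro ξ
      exact LieHom.congr_fun hχ ξ
    apply LinearMap.ext
    intro x
    induction x using TensorProduct.induction_on with
    | zero => simp
    | tmul α ξ =>
      have : α ⊗ₜ[k] ξ = α • ((1 : A) ⊗ₜ[k] ξ) := by
        rw [TensorProduct.smul_tmul', smul_eq_mul, mul_one]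
      rw [this, map_smul, map_smul, hone, hgtmul, one_smul]
    | add x1 x2 h1 h2 => simp only [map_add, h1, h2]
end

section
/- Let k be a field, A a commutative associative unital k-algebra, and (L, a_L) any (k,A)-Lie-Rinehart algebra. Then there exist a set S, a map a_S : S → Der_k(A), and a surjective morphism of (k,A)-Lie-Rinehart algebras g : L_{A,S} → L from the free (k,A)-Lie-Rinehart algebra L_{A,S} = A ⊗_k FreeLie_k(S) (the transformation Lie-Rinehart algebra of (FreeLie_k(S), ā_S), where ā_S is the Lie algebra morphism induced by a_S) onto L. In other words, every (k,A)-Lie-Rinehart algebra is a quotient of a free (k,A)-Lie-Rinehart algebra over some set. -/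
open TensorProduct

universe u v w x

section Aux

variable (k : Type u) (A : Type v) [Field k] [CommRing A] [Algebra k A]
variable (S : Type w) (aS : S → Derivation k A A)

/-- The transformation bracket on pure tensors, as a bilinear map in the second pair. -/
noncomputable def brFAux (α : A) (ξ : FreeLieAlgebra k S) :
    A →ₗ[k] FreeLieAlgebra k S →ₗ[k] A ⊗[k] FreeLieAlgebra k S :=
  LinearMap.mk₂ k
    (fun β η => (α * β) ⊗ₜ[k] ⁅ξ, η⁆
      + (α * (FreeLieAlgebra.lift k aS ξ) β) ⊗ₜ[k] η
      - (β * (FreeLieAlgebra.lift k aS η) α) ⊗ₜ[k] ξ)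
    (by
      intro β₁ β₂ η
      simp only [mul_add, add_mul, map_add, add_tmul]
      abel)
    (by
      intro c β η
      simp only [Derivation.map_smul, mul_smul_comm, smul_mul_assoc, smul_tmul',
        smul_add, smul_sub])
    (by
      intro β η₁ η₂
      simp only [lie_add, tmul_add, map_add, Derivation.add_apply, mul_add, add_tmul]
      abel)
    (by
      intro c β η
      simp only [lie_smul, tmul_smul, map_smul, Derivation.smul_apply, mul_smul_comm,
        smul_tmul', smul_add, smul_sub])

/-- The transformation bracket as a bilinear map `A → F → (A ⊗ F → A ⊗ F)`. -/
noncomputable def brFBil :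
    A →ₗ[k] FreeLieAlgebra k S →ₗ[k]
      (A ⊗[k] FreeLieAlgebra k S) →ₗ[k] A ⊗[k] FreeLieAlgebra k S :=
  LinearMap.mk₂ k (fun α ξ => TensorProduct.lift (brFAux k A S aS α ξ))
    (by
      intro α₁ α₂ ξ
      apply TensorProduct.ext'
      intro β η
      simp only [TensorProduct.lift.tmul, brFAux, LinearMap.mk₂_apply, LinearMap.add_apply]
      simp only [add_mul, mul_add, Derivation.map_add, add_tmul]
      abel)
    (by
      intro c α ξ
      apply TensorProduct.ext'
      intro β η
      simp only [TensorProduct.lift.tmul, brFAux, LinearMap.mk₂_apply, LinearMap.smul_apply]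
      simp only [smul_mul_assoc, mul_smul_comm, Derivation.map_smul, smul_tmul',
        smul_add, smul_sub])
    (by
      intro α ξ₁ ξ₂ 
      apply TensorProduct.ext'
      intro β η
      simp only [TensorProduct.lift.tmul, brFAux, LinearMap.mk₂_apply, LinearMap.add_apply]
      simp only [add_lie, tmul_add, map_add, Derivation.add_apply, mul_add, add_tmul]
      abel)
    (by
      intro c α ξ
      apply TensorProduct.ext'
      intro β η
      simp only [TensorProduct.lift.tmul, brFAux, LinearMap.mk₂_apply, LinearMap.smul_apply]
      simp only [smul_lie, tmul_smul, map_smul, Derivation.smul_apply, mul_smul_comm,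
        smul_tmul', smul_add, smul_sub])

/-- The transformation bracket on `A ⊗ F`. -/
noncomputable def brFmap :
    (A ⊗[k] FreeLieAlgebra k S) →ₗ[k] (A ⊗[k] FreeLieAlgebra k S) →ₗ[k]
      A ⊗[k] FreeLieAlgebra k S :=
  TensorProduct.lift (brFBil k A S aS)

theorem brFmap_tmul (α β : A) (ξ η : FreeLieAlgebra k S) :
    brFmap k A S aS (α ⊗ₜ[k] ξ) (β ⊗ₜ[k] η)
      = (α * β) ⊗ₜ[k] ⁅ξ, η⁆
        + (α * (FreeLieAlgebra.lift k aS ξ) β) ⊗ₜ[k] η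
        - (β * (FreeLieAlgebra.lift k aS η) α) ⊗ₜ[k] ξ := by
  simp [brFmap, brFBil, brFAux]

variable (M : Type x) [AddCommGroup M] [Module k M] [Module A M] [IsScalarTower k A M]
  [SMulCommClass k A M]

/-- `α ⊗ ξ ↦ α • φ ξ`, as an `A`-linear map. -/
noncomputable def gAux (φ : FreeLieAlgebra k S →ₗ[k] M) :
    A ⊗[k] FreeLieAlgebra k S →ₗ[A] M :=
  TensorProduct.AlgebraTensorModule.lift
    ((LinearMap.lsmul A (FreeLieAlgebra k S →ₗ[k] M)).flip φ)

theorem gAux_tmul (φ : FreeLieAlgebra k S →ₗ[k] M) (α : A) (ξ : FreeLieAlgebra k S) :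
    gAux k A S M φ (α ⊗ₜ[k] ξ) = α • φ ξ := by
  simp [gAux]

end Aux

/-- Every `(k,A)`-Lie-Rinehart algebra `L` is a quotient of a free `(k,A)`-Lie-Rinehart algebra:
there exist a set `S`, a map `a_S : S → Der_k(A)`, and a surjective morphism of
`(k,A)`-Lie-Rinehart algebras `g : L_{A,S} → L`, where `L_{A,S} = A ⊗[k] FreeLie_k(S)` is the
transformation Lie-Rinehart algebra of `(FreeLie_k(S), ā_S)` (whose bracket `brF` and anchor
`anchF` are given by the transformation formulas). -/
theorem lie_rinehart_quotient_of_free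
    (k : Type u) (A : Type v) (L : Type w) [Field k] [CommRing A] [Algebra k A]
    [AddCommGroup L] [Module k L] [Module A L] [IsScalarTower k A L]
    -- Lie-Rinehart structure on L
    (brL : L →ₗ[k] L →ₗ[k] L) (aL : L →ₗ[A] Derivation k A A)
    (haltL : ∀ x : L, brL x x = 0)
    (hjacL : ∀ x y z : L, brL x (brL y z) + brL y (brL z x) + brL z (brL x y) = 0)
    (hleibL : ∀ (s t : L) (f : A), brL s (f • t) = f • brL s t + (aL s) f • t)
    (hanchL : ∀ s t : L, aL (brL s t) = ⁅aL s, aL t⁆) :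
    ∃ (S : Type w) (aS : S → Derivation k A A)
      (brF : (A ⊗[k] FreeLieAlgebra k S) →ₗ[k] (A ⊗[k] FreeLieAlgebra k S) →ₗ[k]
        (A ⊗[k] FreeLieAlgebra k S))
      (anchF : (A ⊗[k] FreeLieAlgebra k S) →ₗ[A] Derivation k A A)
      (g : (A ⊗[k] FreeLieAlgebra k S) →ₗ[A] L),
      -- brF and anchF are the transformation Lie-Rinehart bracket and anchor
      (∀ (α β : A) (ξ η : FreeLieAlgebra k S),
        brF (α ⊗ₜ[k] ξ) (β ⊗ₜ[k] η)
          = (α * β) ⊗ₜ[k] ⁅ξ, η⁆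
            + (α * (FreeLieAlgebra.lift k aS ξ) β) ⊗ₜ[k] η
            - (β * (FreeLieAlgebra.lift k aS η) α) ⊗ₜ[k] ξ) ∧
      (∀ (α : A) (ξ : FreeLieAlgebra k S),
        anchF (α ⊗ₜ[k] ξ) = α • (FreeLieAlgebra.lift k aS ξ)) ∧
      -- g is a surjective morphism of Lie-Rinehart algebras
      Function.Surjective g ∧
      (∀ x y : A ⊗[k] FreeLieAlgebra k S, g (brF x y) = brL (g x) (g y)) ∧
      (∀ x : A ⊗[k] FreeLieAlgebra k S, aL (g x) = anchF x) := by
  -- skew-symmetry of brL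
  have hskew : ∀ x y : L, brL x y = - brL y x := by
    intro x y
    have h := haltL (x + y)
    simp only [map_add, LinearMap.add_apply, haltL, zero_add, add_zero] at h
    exact eq_neg_of_add_eq_zero_left (by rw [add_comm]; exact h)
  -- a Lie algebra structure on L from brL
  letI : LieRing L :=
    { (inferInstance : AddCommGroup L) with
      bracket := fun x y => brL x y
      add_lie := fun x y z => by simp [map_add]
      lie_add := fun x y z => by simp [map_add]
      lie_self := haltL
      leibniz_lie := fun x y z => by
        have h := hjacL x y z
        have h1 : brL y (brL z x) = - brL y (brL x z) := by rw [hskew z x]; simp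
        have h2 : brL z (brL x y) = - brL (brL x y) z := by rw [hskew z (brL x y)]
        rw [h1, h2] at h
        show brL x (brL y z) = brL (brL x y) z + brL y (brL x z)
        linear_combination (norm := abel) h }
  letI : LieAlgebra k L :=
    { lie_smul := fun c x y => by show brL x (c • y) = c • brL x y; simp }
  haveI : SMulCommClass k A L :=
    ⟨fun c a x => by
      rw [← algebraMap_smul A c x, ← algebraMap_smul A c (a • x), smul_smul, smul_smul,
        mul_comm]⟩
  set aS' : L → Derivation k A A := fun s => aL s with haS'
  set φ : FreeLieAlgebra k L →ₗ[k] L := (FreeLieAlgebra.lift k (_root_.id : L → L)).toLinearMap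
    with hφ
  have hφlie : ∀ ξ η : FreeLieAlgebra k L, φ ⁅ξ, η⁆ = brL (φ ξ) (φ η) := fun ξ η =>
    (FreeLieAlgebra.lift k (_root_.id : L → L)).map_lie ξ η
  -- the key identification of the induced Lie map with aL ∘ φ
  have hkey : ∀ ξ : FreeLieAlgebra k L, FreeLieAlgebra.lift k aS' ξ = aL (φ ξ) := by
    have : FreeLieAlgebra.lift k aS' =
        ({ toLinearMap := (aL.restrictScalars k).comp φ,
           map_lie' := by
             intro x y
             show aL (φ ⁅x, y⁆) = ⁅aL (φ x), aL (φ y)⁆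
             rw [hφlie]
             exact hanchL _ _ } : FreeLieAlgebra k L →ₗ⁅k⁆ Derivation k A A) := by
      apply FreeLieAlgebra.hom_ext
      intro x
      rw [FreeLieAlgebra.lift_of_apply]
      show aL x = aL ((FreeLieAlgebra.lift k (_root_.id : L → L)) (FreeLieAlgebra.of k x))
      rw [FreeLieAlgebra.lift_of_apply]
      rfl
    intro ξ
    rw [this]
    rfl
  set g : A ⊗[k] FreeLieAlgebra k L →ₗ[A] L := gAux k A L L φ with hgdef
  have hg : ∀ (α : A) (ξ : FreeLieAlgebra k L), g (α ⊗ₜ[k] ξ) = α • φ ξ :=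
    gAux_tmul k A L L φ
  set anchF : A ⊗[k] FreeLieAlgebra k L →ₗ[A] Derivation k A A :=
    gAux k A L (Derivation k A A) (FreeLieAlgebra.lift k aS').toLinearMap with hanchdef
  have hanch : ∀ (α : A) (ξ : FreeLieAlgebra k L),
      anchF (α ⊗ₜ[k] ξ) = α • FreeLieAlgebra.lift k aS' ξ :=
    gAux_tmul k A L (Derivation k A A) (FreeLieAlgebra.lift k aS').toLinearMap
  -- Leibniz in the first argument of brL
  have hleib1 : ∀ (s t : L) (f : A), brL (f • s) t = f • brL s t - (aL t) f • s := by
    intro s t f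
    rw [hskew (f • s) t, hleibL t s f, hskew t s]
    module
  refine ⟨L, aS', brFmap k A L aS', anchF, g, brFmap_tmul k A L aS', hanch, ?_, ?_, ?_⟩
  · -- surjectivity
    intro x
    refine ⟨(1 : A) ⊗ₜ[k] FreeLieAlgebra.of k x, ?_⟩
    rw [hg]
    simp [hφ, FreeLieAlgebra.lift_of_apply]
  · -- bracket compatibility
    intro x y
    induction x using TensorProduct.induction_on with
    | zero => simp
    | tmul α ξ =>
      induction y using TensorProduct.induction_on with
      | zero => simp
      | tmul β η =>
        rw [brFmap_tmul, map_sub, map_add, hg, hg, hg, hg, hg, hφlie, hkey ξ, hkey η,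
          hleib1 (φ ξ) (β • φ η) α, hleibL (φ ξ) (φ η) β, map_smul aL β (φ η)]
        rw [Derivation.smul_apply, smul_eq_mul]
        module
      | add y₁ y₂ h₁ h₂ => simp only [map_add, h₁, h₂]
    | add x₁ x₂ h₁ h₂ => simp only [map_add, LinearMap.add_apply, h₁, h₂]
  · -- anchor compatibility
    intro x
    induction x using TensorProduct.induction_on with
    | zero => simp
    | tmul α ξ => rw [hg, map_smul, ← hkey, hanch]
    | add x₁ x₂ h₁ h₂ => simp only [map_add, h₁, h₂]
end

section
/- With Ũ = Ũ_{A,S} as defined in the context, let ι_A : A → Ũ, α ↦ ⟨α⟩ (a k-algebra homomorphism by the defining relations), and let j_L : L_{A,S} → Ũ be the A-linear map determined by j_L(α ⊗ ξ) = ⟨α⟩ · λ(ξ), where λ : FreeLie_k(S) → Ũ is the k-Lie algebra morphism into Ũ with its commutator bracket induced by s ↦ ⟨s⟩. Then Ũ satisfies the universal property of the universal enveloping algebra of the free Lie-Rinehart algebra L_{A,S}: for every unital associative k-algebra B, every k-algebra homomorphism i : A → B, and every morphism of k-Lie algebras j : L_{A,S} → B (B with its commutator bracket) satisfying i(α)·j(x)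 = j(α·x) and j(x)·i(α) − i(α)·j(x) = i(a(x)(α)) for all α ∈ A and x ∈ L_{A,S} (where a is the anchor of L_{A,S}), there exists a unique k-algebra homomorphism v : Ũ → B such that v ∘ ι_A = i and v ∘ j_L = j. -/
open TensorProduct

attribute [local instance 100] LieRing.ofAssociativeRing

/-- The relations defining `Ũ_{A,S}` inside the free associative algebra on `A ⊔ S`:
`⟨α⟩ + ⟨β⟩ = ⟨α+β⟩`, `⟨α⟩⟨β⟩ = ⟨αβ⟩`, `⟨s⟩⟨α⟩ = ⟨α⟩⟨s⟩ + ⟨a_S(s)(α)⟩`, `c·1 = ⟨c·1_A⟩`. -/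
inductive UtildeRel (k A S : Type*) [CommRing k] [CommRing A] [Algebra k A]
    (aS : S → Derivation k A A) :
    FreeAlgebra k (A ⊕ S) → FreeAlgebra k (A ⊕ S) → Prop
  | add (α β : A) : UtildeRel k A S aS
      (FreeAlgebra.ι k (Sum.inl α) + FreeAlgebra.ι k (Sum.inl β))
      (FreeAlgebra.ι k (Sum.inl (α + β)))
  | mul (α β : A) : UtildeRel k A S aS
      (FreeAlgebra.ι k (Sum.inl α) * FreeAlgebra.ι k (Sum.inl β))
      (FreeAlgebra.ι k (Sum.inl (α * β)))
  | der (s : S) (α : A) : UtildeRel k A S aS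
      (FreeAlgebra.ι k (Sum.inr s) * FreeAlgebra.ι k (Sum.inl α))
      (FreeAlgebra.ι k (Sum.inl α) * FreeAlgebra.ι k (Sum.inr s)
        + FreeAlgebra.ι k (Sum.inl (aS s α)))
  | scalar (c : k) : UtildeRel k A S aS
      (algebraMap k (FreeAlgebra k (A ⊕ S)) c)
      (FreeAlgebra.ι k (Sum.inl (algebraMap k A c)))

/-- `Ũ = Ũ_{A,S}`, the quotient of the free associative `k`-algebra on `A ⊔ S` by the
two-sided ideal generated by the relations `UtildeRel`. -/
abbrev Utilde (k A S : Type*) [CommRing k] [CommRing A] [Algebra k A]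
    (aS : S → Derivation k A A) : Type _ :=
  RingQuot (UtildeRel k A S aS)

/-- The class `⟨α⟩ ∈ Ũ` of a generator coming from `α ∈ A` (so `ι_A : A → Ũ, α ↦ ⟨α⟩`). -/
noncomputable def UtildeA (k A S : Type*) [CommRing k] [CommRing A] [Algebra k A]
    (aS : S → Derivation k A A) : A → Utilde k A S aS :=
  fun α => RingQuot.mkAlgHom k (UtildeRel k A S aS) (FreeAlgebra.ι k (Sum.inl α))

/-- The class `⟨s⟩ ∈ Ũ` of a generator coming from `s ∈ S`. -/
noncomputable def UtildeS (k A S : Type*) [CommRing k] [CommRing A] [Algebra k A]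
    (aS : S → Derivation k A A) : S → Utilde k A S aS :=
  fun s => RingQuot.mkAlgHom k (UtildeRel k A S aS) (FreeAlgebra.ι k (Sum.inr s))

/-- **`Ũ_{A,S}` is the universal enveloping algebra of the free Lie-Rinehart algebra
`L_{A,S} = A ⊗[k] FreeLie_k(S)`.** With `ι_A : A → Ũ, α ↦ ⟨α⟩`, `λ : FreeLie_k(S) → Ũ` the Lie
algebra morphism (into `Ũ` with the commutator bracket) induced by `s ↦ ⟨s⟩`, and
`j_L : L_{A,S} → Ũ` determined by `j_L(α ⊗ ξ) = ⟨α⟩·λ(ξ)`: for every unital associative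
`k`-algebra `B`, every `k`-algebra homomorphism `i : A → B`, and every `k`-Lie algebra morphism
`j : L_{A,S} → B` (for the commutator bracket on `B`) satisfying `i(α)·j(x) = j(α·x)` and
`j(x)·i(α) − i(α)·j(x) = i(a(x)(α))`, where `a = anchF` is the anchor of `L_{A,S}`, there is a
unique `k`-algebra homomorphism `v : Ũ → B` with `v ∘ ι_A = i` and `v ∘ j_L = j`. -/
theorem utilde_universal_property
    (k A S : Type*) [Field k] [CommRing A] [Algebra k A]
    (aS : S → Derivation k A A)
    -- the bracket and anchor of the free Lie-Rinehart algebra L_{A,S}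
    (brF : (A ⊗[k] FreeLieAlgebra k S) →ₗ[k] (A ⊗[k] FreeLieAlgebra k S) →ₗ[k]
      (A ⊗[k] FreeLieAlgebra k S))
    (hbrF : ∀ (α β : A) (ξ η : FreeLieAlgebra k S),
      brF (α ⊗ₜ[k] ξ) (β ⊗ₜ[k] η)
        = (α * β) ⊗ₜ[k] ⁅ξ, η⁆
          + (α * (FreeLieAlgebra.lift k aS ξ) β) ⊗ₜ[k] η
          - (β * (FreeLieAlgebra.lift k aS η) α) ⊗ₜ[k] ξ)
    (anchF : (A ⊗[k] FreeLieAlgebra k S) →ₗ[A] Derivation k A A)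
    (hanchF : ∀ (α : A) (ξ : FreeLieAlgebra k S),
      anchF (α ⊗ₜ[k] ξ) = α • (FreeLieAlgebra.lift k aS ξ))
    -- the map j_L : L_{A,S} → Ũ, determined by j_L(α ⊗ ξ) = ⟨α⟩ · λ(ξ)
    (jL : (A ⊗[k] FreeLieAlgebra k S) →ₗ[k] Utilde k A S aS)
    (hjL : ∀ (α : A) (ξ : FreeLieAlgebra k S),
      jL (α ⊗ₜ[k] ξ) = UtildeA k A S aS α * FreeLieAlgebra.lift k (UtildeS k A S aS) ξ)
    -- the test algebra B and the maps i, j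
    (B : Type*) [Ring B] [Algebra k B]
    (i : A →ₐ[k] B)
    (j : (A ⊗[k] FreeLieAlgebra k S) →ₗ[k] B)
    (hjlie : ∀ x y : A ⊗[k] FreeLieAlgebra k S, j (brF x y) = j x * j y - j y * j x)
    (hij₁ : ∀ (α : A) (x : A ⊗[k] FreeLieAlgebra k S), i α * j x = j (α • x))
    (hij₂ : ∀ (α : A) (x : A ⊗[k] FreeLieAlgebra k S),
      j x * i α - i α * j x = i (anchF x α)) :
    ∃! v : Utilde k A S aS →ₐ[k] B,
      (∀ α : A, v (UtildeA k A S aS α) = i α) ∧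
      (∀ x : A ⊗[k] FreeLieAlgebra k S, v (jL x) = j x) := by
  classical
  set lam := FreeLieAlgebra.lift k (UtildeS k A S aS) with hlam
  -- the map on generators
  set f0 : A ⊕ S → B :=
    Sum.elim (fun α => i α) (fun s => j ((1:A) ⊗ₜ[k] FreeLieAlgebra.of k s)) with hf0
  set F : FreeAlgebra k (A ⊕ S) →ₐ[k] B := FreeAlgebra.lift k f0 with hF
  have hrel : ∀ ⦃x y⦄, UtildeRel k A S aS x y → F x = F y := by
    intro x y h
    induction h with
    | add α β => simp [hF, hf0, map_add]
    | mul α β => simp [hF, hf0, map_mul]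
    | der s α =>
        have h2 := hij₂ α ((1:A) ⊗ₜ[k] FreeLieAlgebra.of k s)
        rw [hanchF, one_smul, FreeLieAlgebra.lift_of_apply] at h2
        have h3 : j ((1:A) ⊗ₜ[k] FreeLieAlgebra.of k s) * i α
            = i α * j ((1:A) ⊗ₜ[k] FreeLieAlgebra.of k s) + i (aS s α) := by
          have := sub_eq_iff_eq_add.mp h2
          rw [this, add_comm]
        simp only [hF, hf0, map_add, map_mul, FreeAlgebra.lift_ι_apply, Sum.elim_inl,
          Sum.elim_inr]
        exact h3
    | scalar c => simp [hF, hf0, AlgHom.commutes]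
  set v : Utilde k A S aS →ₐ[k] B := RingQuot.liftAlgHom k ⟨F, hrel⟩ with hv
  have hvA : ∀ α : A, v (UtildeA k A S aS α) = i α := by
    intro α
    simp [hv, UtildeA, RingQuot.liftAlgHom_mkAlgHom_apply, hF, hf0]
  have hvS : ∀ s : S, v (UtildeS k A S aS s)
      = j ((1:A) ⊗ₜ[k] FreeLieAlgebra.of k s) := by
    intro s
    simp [hv, UtildeS, RingQuot.liftAlgHom_mkAlgHom_apply, hF, hf0]
  -- the Lie hom ξ ↦ j (1 ⊗ ξ)
  have hbr1 : ∀ ξ η : FreeLieAlgebra k S,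
      j ((1:A) ⊗ₜ[k] ⁅ξ, η⁆)
        = j ((1:A) ⊗ₜ[k] ξ) * j ((1:A) ⊗ₜ[k] η)
          - j ((1:A) ⊗ₜ[k] η) * j ((1:A) ⊗ₜ[k] ξ) := by
    intro ξ η
    have hb := hbrF 1 1 ξ η
    simp only [one_mul, Derivation.map_one_eq_zero, TensorProduct.zero_tmul,
      add_zero, sub_zero] at hb
    rw [← hjlie, hb]
  let jlie : FreeLieAlgebra k S →ₗ⁅k⁆ B :=
    { toFun := fun ξ => j ((1:A) ⊗ₜ[k] ξ)
      map_add' := fun ξ η => by simp [TensorProduct.tmul_add]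
      map_smul' := fun c ξ => by simp [TensorProduct.tmul_smul]
      map_lie' := fun {ξ η} => by
        simp only [Ring.lie_def]
        exact hbr1 ξ η }
  have hlamv : ∀ ξ : FreeLieAlgebra k S, v (lam ξ) = j ((1:A) ⊗ₜ[k] ξ) := by
    have : (v : Utilde k A S aS →ₗ⁅k⁆ B).comp lam = jlie := by
      apply FreeLieAlgebra.hom_ext
      intro s
      simp only [LieHom.comp_apply, hlam, FreeLieAlgebra.lift_of_apply]
      exact hvS s
    intro ξ
    exact congrFun (congrArg (fun (g : FreeLieAlgebra k S →ₗ⁅k⁆ B) => (g : _ → _)) this) ξ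
  have hvj : ∀ x : A ⊗[k] FreeLieAlgebra k S, v (jL x) = j x := by
    intro x
    induction x using TensorProduct.induction_on with
    | zero => simp
    | tmul α ξ =>
        rw [hjL, map_mul, hvA, hlamv, hij₁, TensorProduct.smul_tmul',
          smul_eq_mul, mul_one]
    | add x y hx hy => rw [map_add, map_add, map_add, hx, hy]
  refine ⟨v, ⟨hvA, hvj⟩, ?_⟩
  rintro v' ⟨h1, h2⟩
  -- ⟨1⟩ = 1 in Ũ
  have hone : UtildeA k A S aS 1 = 1 := by
    have h := RingQuot.mkAlgHom_rel k (UtildeRel.scalar (k := k) (A := A) (S := S)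
      (aS := aS) 1)
    simp only [map_one] at h
    rw [UtildeA, ← h]
  have hS' : ∀ s : S, jL ((1:A) ⊗ₜ[k] FreeLieAlgebra.of k s) = UtildeS k A S aS s := by
    intro s
    rw [hjL, FreeLieAlgebra.lift_of_apply, hone, one_mul]
  apply RingQuot.ringQuot_ext'
  apply FreeAlgebra.hom_ext
  funext x
  cases x with
  | inl α =>
      simp only [Function.comp_apply, AlgHom.coe_comp]
      exact (h1 α).trans (hvA α).symm
  | inr s =>
      simp only [Function.comp_apply, AlgHom.coe_comp]
      have e1 : v' (UtildeS k A S aS s) = j ((1:A) ⊗ₜ[k] FreeLieAlgebra.of k s) := by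
        rw [← hS', h2]
      exact e1.trans (hvS s).symm
end

section
/- Let k be a field, A a commutative associative unital k-algebra, S a set, a_S : S → Der_k(A) a map, and L_{A,S} = A ⊗_k FreeLie_k(S) the free (k,A)-Lie-Rinehart algebra (the transformation Lie-Rinehart algebra of (FreeLie_k(S), ā_S), with anchor a). Let (M, ρ) be a representation of L_{A,S}, i.e. an A-module M with an A-linear map ρ : L_{A,S} → End_k(M) satisfying ρ(x)(f·m) = f·ρ(x)(m) + a(x)(f)·m and ρ([x,y]) = [ρ(x), ρ(y)]. Then for every map δ₀ : S → M there exists a unique A-linear map D : L_{A,S} → M such that D(1 ⊗ ι(s)) = δ₀(s) for all s ∈ S and D([x,y]) = ρ(x)(D(y)) − ρ(y)(D(x)) for all x,y ∈ L_{A,S} (i.e. D is a derivation of the free Lie-Rinehart algebra with values in M extending δ₀). -/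
open TensorProduct


section SD
attribute [local instance 100] LieRing.ofAssociativeRing
variable {k L M : Type*} [CommRing k] [LieRing L] [LieAlgebra k L]
  [AddCommGroup M] [Module k M] (π : L →ₗ⁅k⁆ Module.End k M)

/-- The bracket of the semidirect product `L ⋉ M`. -/
def sdBracket (x y : L × M) : L × M := (⁅x.1, y.1⁆, π x.1 y.2 - π y.1 x.2)

def sdLieRing : LieRing (L × M) where
  bracket := sdBracket π
  add_lie x y z := by
    show sdBracket π (x + y) z = sdBracket π x z + sdBracket π y z
    simp only [sdBracket, Prod.fst_add, Prod.snd_add, add_lie, map_add, map_add, LinearMap.add_apply,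
      Prod.mk_add_mk, Prod.mk.injEq]
    constructor
    · trivial
    · abel
  lie_add x y z := by
    show sdBracket π x (y + z) = sdBracket π x y + sdBracket π x z
    simp only [sdBracket, Prod.fst_add, Prod.snd_add, lie_add, map_add, map_add, LinearMap.add_apply,
      Prod.mk_add_mk, Prod.mk.injEq]
    constructor
    · trivial
    · abel
  lie_self x := by
    show sdBracket π x x = 0
    simp [sdBracket, Prod.ext_iff]
  leibniz_lie x y z := by
    show sdBracket π x (sdBracket π y z)
      = sdBracket π (sdBracket π x y) z + sdBracket π y (sdBracket π x z)
    simp only [sdBracket, Prod.mk_add_mk, Prod.mk.injEq, LieHom.map_lie, Ring.lie_def,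
      map_sub, LinearMap.sub_apply, Module.End.mul_apply]
    constructor
    · exact leibniz_lie _ _ _
    · abel

def sdLieAlgebra : @LieAlgebra k (L × M) _ (sdLieRing π) := by
  letI := sdLieRing π
  exact
  { lie_smul := fun t x y => by
      show sdBracket π x (t • y) = t • sdBracket π x y
      simp [sdBracket, Prod.ext_iff, smul_sub]
    toModule := Prod.instModule }

end SD


/-- **Derivations of the free Lie-Rinehart algebra are freely determined by their values on the
generators.** Let `L_{A,S} = A ⊗[k] FreeLie_k(S)` be the free `(k,A)`-Lie-Rinehart algebra
(with transformation bracket `brF` and anchor `anchF`), and let `(M, ρ)` be a representation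
of `L_{A,S}`. Then for every map `δ₀ : S → M` there exists a unique `A`-linear map
`D : L_{A,S} → M` with `D(1 ⊗ ι(s)) = δ₀(s)` for all `s ∈ S` and
`D([x,y]) = ρ(x)(D(y)) − ρ(y)(D(x))` for all `x, y`. -/
theorem free_lie_rinehart_derivations
    (k A S M : Type*) [Field k] [CommRing A] [Algebra k A]
    [AddCommGroup M] [Module k M] [Module A M] [IsScalarTower k A M] [SMulCommClass k A M]
    (aS : S → Derivation k A A)
    -- the bracket and anchor of the free Lie-Rinehart algebra L_{A,S}
    (brF : (A ⊗[k] FreeLieAlgebra k S) →ₗ[k] (A ⊗[k] FreeLieAlgebra k S) →ₗ[k]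
      (A ⊗[k] FreeLieAlgebra k S))
    (hbrF : ∀ (α β : A) (ξ η : FreeLieAlgebra k S),
      brF (α ⊗ₜ[k] ξ) (β ⊗ₜ[k] η)
        = (α * β) ⊗ₜ[k] ⁅ξ, η⁆
          + (α * (FreeLieAlgebra.lift k aS ξ) β) ⊗ₜ[k] η
          - (β * (FreeLieAlgebra.lift k aS η) α) ⊗ₜ[k] ξ)
    (anchF : (A ⊗[k] FreeLieAlgebra k S) →ₗ[A] Derivation k A A)
    (hanchF : ∀ (α : A) (ξ : FreeLieAlgebra k S),
      anchF (α ⊗ₜ[k] ξ) = α • (FreeLieAlgebra.lift k aS ξ))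
    -- the representation (M, ρ) of L_{A,S}
    (ρ : (A ⊗[k] FreeLieAlgebra k S) →ₗ[A] Module.End k M)
    (hρleib : ∀ (x : A ⊗[k] FreeLieAlgebra k S) (f : A) (m : M),
      ρ x (f • m) = f • ρ x m + (anchF x) f • m)
    (hρlie : ∀ x y : A ⊗[k] FreeLieAlgebra k S,
      ρ (brF x y) = ρ x * ρ y - ρ y * ρ x)
    -- the prescribed values on the generators
    (δ₀ : S → M) :
    ∃! D : (A ⊗[k] FreeLieAlgebra k S) →ₗ[A] M,
      (∀ s : S, D ((1 : A) ⊗ₜ[k] FreeLieAlgebra.of k s) = δ₀ s) ∧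
      (∀ x y : A ⊗[k] FreeLieAlgebra k S,
        D (brF x y) = ρ x (D y) - ρ y (D x)) := by
  classical
  -- brackets of `1 ⊗ ξ`
  have hbr1 : ∀ ξ η : FreeLieAlgebra k S,
      brF ((1:A) ⊗ₜ[k] ξ) ((1:A) ⊗ₜ[k] η) = (1:A) ⊗ₜ[k] ⁅ξ, η⁆ := by
    intro ξ η
    rw [hbrF]
    simp
  -- the action of the free Lie algebra on M, as a Lie algebra morphism
  letI : LieRing (Module.End k M) := LieRing.ofAssociativeRing
  let π : FreeLieAlgebra k S →ₗ⁅k⁆ Module.End k M :=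
    { toLinearMap := (ρ.restrictScalars k).comp ((TensorProduct.mk k A (FreeLieAlgebra k S)) 1)
      map_lie' := by
        intro ξ η
        show ρ ((1:A) ⊗ₜ[k] ⁅ξ, η⁆) = ⁅ρ ((1:A) ⊗ₜ[k] ξ), ρ ((1:A) ⊗ₜ[k] η)⁆
        rw [← hbr1, hρlie, Ring.lie_def] }
  have hπ : ∀ ξ, (π ξ : Module.End k M) = ρ ((1:A) ⊗ₜ[k] ξ) := fun _ => rfl
  letI : LieRing (FreeLieAlgebra k S × M) := sdLieRing π
  letI : LieAlgebra k (FreeLieAlgebra k S × M) := sdLieAlgebra π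
  -- lift into the semidirect product
  let φ : FreeLieAlgebra k S →ₗ⁅k⁆ FreeLieAlgebra k S × M :=
    FreeLieAlgebra.lift k (fun s => (FreeLieAlgebra.of k s, δ₀ s))
  let p : (FreeLieAlgebra k S × M) →ₗ⁅k⁆ FreeLieAlgebra k S :=
    { toFun := Prod.fst, map_add' := fun _ _ => rfl, map_smul' := fun _ _ => rfl,
      map_lie' := fun {_ _} => rfl }
  have hfst : ∀ ξ, (φ ξ).1 = ξ := by
    have h : p.comp φ = LieHom.id := by
      apply FreeLieAlgebra.hom_ext
      intro s
      simp [p, φ, FreeLieAlgebra.lift_of_apply]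
      rfl
    intro ξ
    exact congrArg (fun f : _ →ₗ⁅k⁆ _ => f ξ) h
  let d : FreeLieAlgebra k S →ₗ[k] M :=
    (LinearMap.snd k (FreeLieAlgebra k S) M).comp φ.toLinearMap
  have hd_of : ∀ s, d (FreeLieAlgebra.of k s) = δ₀ s := by
    intro s; show (φ (FreeLieAlgebra.of k s)).2 = δ₀ s; simp [φ, FreeLieAlgebra.lift_of_apply]
  have hd_lie : ∀ ξ η, d ⁅ξ, η⁆ = π ξ (d η) - π η (d ξ) := by
    intro ξ η
    show (φ ⁅ξ, η⁆).2 = _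
    rw [φ.map_lie]
    show π (φ ξ).1 (φ η).2 - π (φ η).1 (φ ξ).2 = _
    rw [hfst, hfst]
    rfl
  -- the extension D
  let D : (A ⊗[k] FreeLieAlgebra k S) →ₗ[A] M := d.liftBaseChange A
  have hDt : ∀ (α : A) (ξ : FreeLieAlgebra k S), D (α ⊗ₜ[k] ξ) = α • d ξ := fun α ξ => rfl
  have hsm : ∀ (α : A) (ξ : FreeLieAlgebra k S),
      (α ⊗ₜ[k] ξ : A ⊗[k] FreeLieAlgebra k S) = α • ((1:A) ⊗ₜ[k] ξ) := by
    intro α ξ; rw [smul_tmul', smul_eq_mul, mul_one]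
  have hρsm : ∀ (α : A) (ξ : FreeLieAlgebra k S) (m : M),
      ρ (α ⊗ₜ[k] ξ) m = α • ρ ((1:A) ⊗ₜ[k] ξ) m := by
    intro α ξ m
    rw [hsm, map_smul, LinearMap.smul_apply]
  -- the derivation property on pure tensors
  have key : ∀ (α β : A) (ξ η : FreeLieAlgebra k S),
      D (brF (α ⊗ₜ[k] ξ) (β ⊗ₜ[k] η))
        = ρ (α ⊗ₜ[k] ξ) (D (β ⊗ₜ[k] η)) - ρ (β ⊗ₜ[k] η) (D (α ⊗ₜ[k] ξ)) := by
    intro α β ξ η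
    rw [hbrF, map_sub, map_add, hDt, hDt, hDt, hDt, hDt, hd_lie,
      hρleib, hρleib, hanchF, hanchF, Derivation.smul_apply, Derivation.smul_apply,
      hρsm α ξ, hρsm β η, ← hπ ξ, ← hπ η]
    simp only [smul_eq_mul, smul_sub, smul_smul]
    module
  -- the derivation property in general
  have hder : ∀ x y : A ⊗[k] FreeLieAlgebra k S,
      D (brF x y) = ρ x (D y) - ρ y (D x) := by
    intro x y
    induction x using TensorProduct.induction_on with
    | zero => simp
    | tmul α ξ =>
      induction y using TensorProduct.induction_on with
      | zero => simp
      | tmul β η => exact key α β ξ η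
      | add y₁ y₂ h₁ h₂ =>
        simp only [map_add, LinearMap.add_apply, h₁, h₂]
        abel
    | add x₁ x₂ h₁ h₂ =>
      simp only [map_add, LinearMap.add_apply, h₁, h₂]
      abel
  refine ⟨D, ⟨fun s => by simpa [hDt] using hd_of s, hder⟩, ?_⟩
  -- uniqueness
  rintro D' ⟨hD'of, hD'der⟩
  have hd' : ∀ ξ, D' ((1:A) ⊗ₜ[k] ξ) = d ξ := by
    let ψ : FreeLieAlgebra k S →ₗ⁅k⁆ FreeLieAlgebra k S × M :=
      { toFun := fun ξ => (ξ, D' ((1:A) ⊗ₜ[k] ξ))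
        map_add' := fun ξ η => by
          simp only [tmul_add, map_add]; rfl
        map_smul' := fun t ξ => by
          simp only [← tmul_smul, LinearMap.map_smul_of_tower, RingHom.id_apply,
            Prod.smul_mk, tmul_smul]
          rfl
        map_lie' := by
          intro ξ η
          show (⁅ξ, η⁆, D' ((1:A) ⊗ₜ[k] ⁅ξ, η⁆))
            = (⁅ξ, η⁆, π ξ (D' ((1:A) ⊗ₜ[k] η)) - π η (D' ((1:A) ⊗ₜ[k] ξ)))
          rw [← hbr1, hD'der, hπ, hπ] }
    have hψ : ψ = φ := by
      apply FreeLieAlgebra.hom_ext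
      intro s
      show (FreeLieAlgebra.of k s, D' ((1:A) ⊗ₜ[k] FreeLieAlgebra.of k s)) = φ (FreeLieAlgebra.of k s)
      rw [hD'of, FreeLieAlgebra.lift_of_apply]
    intro ξ
    have := congrArg (fun f : _ →ₗ⁅k⁆ _ => (f ξ).2) hψ
    exact this
  apply LinearMap.ext
  intro x
  induction x using TensorProduct.induction_on with
  | zero => simp
  | tmul α ξ => rw [hsm, map_smul, map_smul, hd' ξ, hDt, one_smul]
  | add x₁ x₂ h₁ h₂ => simp [map_add, h₁, h₂]
end
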